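/- From any configuration of the peg puzzle, no more than N consecutive weight-increasing jumps are possible. -/

import Mathlib

/-- A cell of the puzzle: a blue peg, a red peg, or an empty hole. -/
inductive Cell
  | B : Cell
  | R : Cell
  | O : Cell
  deriving DecidableEq

open Cell

/-- A step: a peg (of either color) moves into the adjacent empty hole. -/
def StepMove (c d : List Cell) : Prop :=
  ∃ x y p, p ≠ O ∧
    ((c = x ++ p :: O :: y ∧ d = x ++ O :: p :: y) ∨
     (c = x ++ O :: p :: y ∧ d = x ++ p :: O :: y))

/-- A jump: a peg jumps over a single adjacent peg into the empty hole. -/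
def JumpMove (c d : List Cell) : Prop :=
  ∃ x y p q, p ≠ O ∧ q ≠ O ∧
    ((c = x ++ p :: q :: O :: y ∧ d = x ++ O :: q :: p :: y) ∨
     (c = x ++ O :: q :: p :: y ∧ d = x ++ p :: q :: O :: y))

/-- A legal move of the puzzle: a step or a jump. -/
def PegMove (c d : List Cell) : Prop := StepMove c d ∨ JumpMove c d

/-- Initial configuration `BᴺORᴺ`. -/
def startCfg (N : ℕ) : List Cell := List.replicate N B ++ O :: List.replicate N R

/-- Final configuration `RᴺOBᴺ`. -/
def finishCfg (N : ℕ) : List Cell := List.replicate N R ++ O :: List.replicate N B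

/-- `IsSolution N L f` : `f 0, f 1, …, f L` is a sequence of configurations
beginning at `BᴺORᴺ`, ending at `RᴺOBᴺ`, each obtained from the previous one
by a legal move; it uses `L` moves. -/
def IsSolution (N L : ℕ) (f : ℕ → List Cell) : Prop :=
  f 0 = startCfg N ∧ f L = finishCfg N ∧ ∀ t < L, PegMove (f t) (f (t + 1))

/-- A weight-increasing jump: a blue peg jumps to the right, or a red peg
jumps to the left, over a single adjacent peg into the empty hole. -/
def WeightIncreasingJump (c d : List Cell) : Prop :=
  (∃ x y p, p ≠ O ∧ c = x ++ B :: p :: O :: y ∧ d = x ++ O :: p :: B :: y) ∨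
  (∃ x y p, p ≠ O ∧ c = x ++ O :: p :: R :: y ∧ d = x ++ R :: p :: O :: y)

lemma hole_unique : ∀ (x x' y y' : List Cell), O ∉ x → O ∉ x' →
    x ++ O :: y = x' ++ O :: y' → x = x' ∧ y = y' := by
  intro x
  induction x with
  | nil =>
    intro x' y y' _ hx' h
    cases x' with
    | nil => simpa using h
    | cons a t =>
      simp only [List.nil_append, List.cons_append, List.cons.injEq] at h
      exact absurd (h.1 ▸ (List.mem_cons_self : a ∈ a :: t)) hx'
  | cons a t ih =>
    intro x' y y' hx hx' h
    cases x' with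
    | nil =>
      simp only [List.nil_append, List.cons_append, List.cons.injEq] at h
      exact absurd (h.1 ▸ (List.mem_cons_self : a ∈ a :: t)) hx
    | cons b t' =>
      simp only [List.cons_append, List.cons.injEq] at h
      obtain ⟨hab, htail⟩ := h
      obtain ⟨h1, h2⟩ := ih t' y y' (fun hm => hx (List.mem_cons_of_mem a hm))
        (fun hm => hx' (List.mem_cons_of_mem b hm)) htail
      exact ⟨by rw [hab, h1], h2⟩

lemma count_O_parts {l x y : List Cell} {a b : Cell} (h : l = x ++ a :: b :: O :: y)
    (hc : l.count O = 1) (ha : a ≠ O) (hb : b ≠ O) : O ∉ x ∧ O ∉ y := by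
  subst h
  simp [List.count_append, List.count_cons, ha, hb] at hc
  exact ⟨List.count_eq_zero.1 (by omega), List.count_eq_zero.1 (by omega)⟩

lemma count_O_parts' {l x y : List Cell} {a b : Cell} (h : l = x ++ O :: a :: b :: y)
    (hc : l.count O = 1) (ha : a ≠ O) (hb : b ≠ O) : O ∉ x ∧ O ∉ y := by
  subst h
  simp [List.count_append, List.count_cons, ha, hb] at hc
  exact ⟨List.count_eq_zero.1 (by omega), List.count_eq_zero.1 (by omega)⟩

lemma chainB : ∀ (m : ℕ) (f : ℕ → List Cell),
    (∀ t < m, WeightIncreasingJump (f t) (f (t + 1))) →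
    ∀ x p y, p ≠ O → O ∉ x → O ∉ y → f 0 = x ++ O :: p :: B :: y →
    2 * m ≤ x.length := by
  intro m
  induction m with
  | zero => intro f _ x p y _ _ _ _; omega
  | succ m ih =>
    intro f hm x p y hp hx hy h0
    have hcount : (f 0).count O = 1 := by
      rw [h0]
      simp [List.count_append, List.count_cons, hp, List.count_eq_zero.2 hx,
        List.count_eq_zero.2 hy]
    rcases hm 0 (by omega) with ⟨x', y', q, hq, h1, h2⟩ | ⟨x', y', q, hq, h1, h2⟩
    · -- type 1 jump: f 0 = x' ++ B :: q :: O :: y'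
      obtain ⟨hx', hy'⟩ := count_O_parts h1 hcount (by simp) hq
      have huniq := hole_unique x (x' ++ [B, q]) (p :: B :: y) y' hx
        (by simp [hx']; tauto) (by rw [← h0, h1]; simp)
      have h2' : f 1 = x' ++ O :: q :: B :: y' := h2
      have := ih (fun t => f (t + 1)) (fun t ht => hm (t + 1) (by omega)) x' q y' hq hx' hy' h2'
      have hlen : x.length = x'.length + 2 := by rw [huniq.1]; simp
      omega
    · -- type 2 jump: f 0 = x' ++ O :: q :: R :: y' — impossible
      obtain ⟨hx', hy'⟩ := count_O_parts' h1 hcount hq (by simp)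
      have huniq := hole_unique x x' (p :: B :: y) (q :: R :: y') hx hx' (by rw [← h0, h1])
      have : (B : Cell) = R := by
        have := huniq.2
        simp only [List.cons.injEq] at this
        exact this.2.1
      exact absurd this (by simp)

lemma chainR : ∀ (m : ℕ) (f : ℕ → List Cell),
    (∀ t < m, WeightIncreasingJump (f t) (f (t + 1))) →
    ∀ x p y, p ≠ O → O ∉ x → O ∉ y → f 0 = x ++ R :: p :: O :: y →
    2 * m ≤ y.length := by
  intro m
  induction m with
  | zero => intro f _ x p y _ _ _ _; omega
  | succ m ih =>
    intro f hm x p y hp hx hy h0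
    have hcount : (f 0).count O = 1 := by
      rw [h0]
      simp [List.count_append, List.count_cons, hp, List.count_eq_zero.2 hx,
        List.count_eq_zero.2 hy]
    rcases hm 0 (by omega) with ⟨x', y', q, hq, h1, h2⟩ | ⟨x', y', q, hq, h1, h2⟩
    · -- type 1 jump: f 0 = x' ++ B :: q :: O :: y' — impossible
      obtain ⟨hx', hy'⟩ := count_O_parts h1 hcount (by simp) hq
      have huniq := hole_unique (x ++ [R, p]) (x' ++ [B, q]) y y'
        (by simp [hx]; tauto) (by simp [hx']; tauto)
        (by rw [← (by simpa using h0 : f 0 = (x ++ [R, p]) ++ O :: y),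
               (by simpa using h1 : f 0 = (x' ++ [B, q]) ++ O :: y')])
      have heq := huniq.1
      have hRB : (R : Cell) = B := by
        have hl : x.length = x'.length := by
          simpa using congrArg List.length heq
        obtain ⟨-, h2'⟩ := List.append_inj heq hl
        simpa using congrArg (fun l => l.head?) h2'
      exact absurd hRB (by simp)
    · -- type 2 jump: f 0 = x' ++ O :: q :: R :: y'
      obtain ⟨hx', hy'⟩ := count_O_parts' h1 hcount hq (by simp)
      have huniq := hole_unique (x ++ [R, p]) x' y (q :: R :: y')
        (by simp [hx]; tauto) hx'
        (by rw [← (by simpa using h0 : f 0 = (x ++ [R, p]) ++ O :: y), h1])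
      have h2' : f 1 = (x ++ [R, p]) ++ R :: q :: O :: y' := by
        rw [h2, ← huniq.1]
      have h2'' : f 1 = (x ++ [R, p]) ++ R :: q :: O :: y' := h2'
      have := ih (fun t => f (t + 1)) (fun t ht => hm (t + 1) (by omega))
        (x ++ [R, p]) q y' hq (by simp [hx]; tauto) hy' h2''
      have hlen : y.length = y'.length + 2 := by rw [huniq.2]; simp
      omega

lemma count_sum (l : List Cell) : l.count B + l.count R + l.count O = l.length := by
  induction l with
  | nil => simp
  | cons a t ih => cases a <;> simp [List.count_cons] <;> omega

/-- From any configuration of the `N`-peg puzzle (a row of `2N + 1` holes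
containing `N` blue pegs, `N` red pegs and one empty hole), no more than `N`
consecutive weight-increasing jumps are possible. -/
theorem consecutive_jumps_le (N L : ℕ) (f : ℕ → List Cell)
    (hlen : (f 0).length = 2 * N + 1)
    (hB : (f 0).count B = N) (hR : (f 0).count R = N)
    (hmoves : ∀ t < L, WeightIncreasingJump (f t) (f (t + 1))) :
    L ≤ N := by
  rcases Nat.eq_zero_or_pos L with hL | hL
  · omega
  have hcount : (f 0).count O = 1 := by have := count_sum (f 0); omega
  rcases hmoves 0 hL with ⟨x, y, p, hp, h1, h2⟩ | ⟨x, y, p, hp, h1, h2⟩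
  · obtain ⟨hx, hy⟩ := count_O_parts h1 hcount (by simp) hp
    have hchain := chainB (L - 1) (fun t => f (t + 1))
      (fun t ht => hmoves (t + 1) (by omega)) x p y hp hx hy h2
    have hxl : x.length + 3 + y.length = 2 * N + 1 := by
      have := congrArg List.length h1
      simp at this; omega
    omega
  · obtain ⟨hx, hy⟩ := count_O_parts' h1 hcount hp (by simp)
    have hchain := chainR (L - 1) (fun t => f (t + 1))
      (fun t ht => hmoves (t + 1) (by omega)) x p y hp hx hy h2
    have hxl : x.length + 3 + y.length = 2 * N + 1 := by
      have := congrArg List.length h1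
      simp at this; omega
    omega
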